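/- Let (𝒜_i)_{i∈I} be subalgebras of a non-commutative probability space (𝒜, φ) that are BMT independent with respect to a digraph G = (I, E). Let {I_j : j ∈ J} be a partition of I into non-empty pairwise disjoint subsets and let ℬ_j be the subalgebra generated by the 𝒜_i with i ∈ I_j. If (i, i') ∉ E whenever i ∈ I_j and i' ∈ I_{j'} with j ≠ j', then the family (ℬ_j)_{j∈J} is boolean independent. -/

import Mathlib

open scoped Classical
open Filter

noncomputable section

/-- The relation defining the kernel of `f` restricted to the index set `S`,
subordinated to the digraph with edge relation `E`: `k ∼ k'` iff `f k = f k'` and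
every `l ∈ S` strictly between `k` and `k'` with `f l ≠ f k` satisfies `(f l, f k) ∈ E`. -/
def kerGRelOn {m : ℕ} {V : Type*} (E : V → V → Prop) (f : Fin m → V)
    (S : Finset (Fin m)) (k k' : Fin m) : Prop :=
  f k = f k' ∧ ∀ l ∈ S, min k k' < l → l < max k k' → f l ≠ f k → E (f l) (f k)

/-- The blocks of the kernel of `f|_S` subordinated to the digraph `E`. -/
def kerGBlocks {m : ℕ} {V : Type*} (E : V → V → Prop) (f : Fin m → V)
    (S : Finset (Fin m)) : Finset (Finset (Fin m)) :=
  S.image fun k => S.filter fun k' => kerGRelOn E f S k k'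

/-- The blocks of the plain kernel `ker[f]` of `f : [m] → V`. -/
def kerBlocks {m : ℕ} {V : Type*} (f : Fin m → V) : Finset (Finset (Fin m)) :=
  Finset.univ.image fun k => Finset.univ.filter fun k' => f k = f k'

/-- The product of `a k` for `k ∈ B`, taken in increasing order of `k`. -/
def blockProd {A : Type*} [Monoid A] {m : ℕ} (a : Fin m → A) (B : Finset (Fin m)) : A :=
  ((B.sort (· ≤ ·)).map a).prod

/-- The edge set of the nesting-crossing graph of the partition `π`, relabeled along `f`:
the pair `(f-label of B, f-label of C)` is an edge whenever `B ≠ C` are blocks of `π` and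
some `l ∈ B` lies strictly between two elements (equivalently, between min and max) of `C`. -/
def nestCrossEdges {m : ℕ} {V : Type*} (π : Finset (Finset (Fin m))) (f : Fin m → V) :
    Set (V × V) :=
  { p | ∃ B ∈ π, ∃ C ∈ π, B ≠ C ∧
      (∃ l ∈ B, ∃ c₁ ∈ C, ∃ c₂ ∈ C, c₁ < l ∧ l < c₂) ∧
      (∃ k ∈ B, f k = p.1) ∧ (∃ k' ∈ C, f k' = p.2) }

/-- A family of (non-unital) subalgebras of a non-commutative probability space `(𝒜, φ)`
is BMT independent with respect to the digraph `E` on the index set `I`. -/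
def BMTIndep {𝒜 : Type*} [Ring 𝒜] [Algebra ℂ 𝒜] (φ : 𝒜 →ₗ[ℂ] ℂ)
    {I : Type*} (E : I → I → Prop) (A : I → NonUnitalSubalgebra ℂ 𝒜) : Prop :=
  ∀ (m : ℕ), 1 ≤ m → ∀ (idx : Fin m → I) (a : Fin m → 𝒜),
    (∀ k, a k ∈ A (idx k)) →
    φ (List.ofFn a).prod = ∏ B ∈ kerGBlocks E idx Finset.univ, φ (blockProd a B)

/-- Random variables `a 0, …, a (N-1)` are BMT independent with respect to the digraph `E`. -/
def BMTIndepVars {𝒜 : Type*} [Ring 𝒜] [Algebra ℂ 𝒜] (φ : 𝒜 →ₗ[ℂ] ℂ)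
    {N : ℕ} (E : Fin N → Fin N → Prop) (a : Fin N → 𝒜) : Prop :=
  ∀ (m : ℕ) (idx : Fin m → Fin N),
    φ (List.ofFn fun k => a (idx k)).prod
      = ∏ B ∈ kerGBlocks E idx Finset.univ, φ (blockProd (fun k => a (idx k)) B)


theorem ofFn_update {A : Type*} {m : ℕ} (b : Fin m → A) (k : Fin m) (x : A) :
    List.ofFn (Function.update b k x) = (List.ofFn b).set k x := by
  apply List.ext_getElem
  · simp
  · intro i hi hi'
    simp only [List.getElem_ofFn, List.getElem_set, List.length_ofFn] at *
    by_cases h : (k : ℕ) = i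
    · rw [if_pos h, Function.update_apply, if_pos (by exact Fin.ext h.symm)]
    · rw [if_neg h, Function.update_apply, if_neg (fun hh => h (by rw [← hh]))]

theorem span_induction_pi {A : Type*} [Ring A] [Algebra ℂ A] {m : ℕ}
    (s : Fin m → Set A) (Pr : (Fin m → A) → Prop)
    (h0 : ∀ (b : Fin m → A) (k : Fin m), Pr (Function.update b k 0))
    (hadd : ∀ b k x y, Pr (Function.update b k x) → Pr (Function.update b k y) →
      Pr (Function.update b k (x + y)))
    (hsmul : ∀ b k (c : ℂ) x, Pr (Function.update b k x) → Pr (Function.update b k (c • x)))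
    (hbase : ∀ b, (∀ k, b k ∈ s k) → Pr b) :
    ∀ b, (∀ k, b k ∈ Submodule.span ℂ (s k)) → Pr b := by
  suffices H : ∀ N : ℕ, ∀ b : Fin m → A, (∀ k : Fin m, (k : ℕ) < N → b k ∈ Submodule.span ℂ (s k)) →
      (∀ k : Fin m, N ≤ (k : ℕ) → b k ∈ s k) → Pr b by
    intro b hb
    exact H m b (fun k _ => hb k) (fun k hk => absurd k.isLt (not_lt.mpr hk))
  intro N
  induction N with
  | zero => exact fun b h1 h2 => hbase b (fun k => h2 k (Nat.zero_le _))
  | succ N ih =>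
    intro b h1 h2
    by_cases hNm : N < m
    · set K : Fin m := ⟨N, hNm⟩ with hK
      have hx : b K ∈ Submodule.span ℂ (s K) := h1 K (by simp [hK])
      have key : ∀ x ∈ Submodule.span ℂ (s K), Pr (Function.update b K x) := by
        intro x hx
        induction hx using Submodule.span_induction with
        | mem y hy =>
          apply ih
          · intro k hk
            rw [Function.update_apply, if_neg (by rintro rfl; simp [hK] at hk)]
            exact h1 k (by omega)
          · intro k hk
            rcases eq_or_lt_of_le hk with h | h
            · have : k = K := Fin.ext (by simp [hK, ← h])
              rw [this, Function.update_self]; exact hy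
            · rw [Function.update_apply, if_neg (by rintro rfl; simp [hK] at h)]
              exact h2 k (by omega)
        | zero => exact h0 b K
        | add y z hy hz ihy ihz => exact hadd b K y z ihy ihz
        | smul c y hy ihy => exact hsmul b K c y ihy
      have := key (b K) hx
      rwa [Function.update_eq_self] at this
    · apply ih
      · exact fun k hk => h1 k (by omega)
      · intro k hk
        exact absurd k.isLt (by omega)

theorem prod_ofFn_update {A : Type*} [Monoid A] {m : ℕ} (b : Fin m → A) (k : Fin m) (x : A) :
    (List.ofFn (Function.update b k x)).prod
      = ((List.ofFn b).take k).prod * x * ((List.ofFn b).drop (k + 1)).prod := by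
  rw [ofFn_update, List.prod_set, if_pos (by simp [k.isLt])]

theorem phi_prod_update {A : Type*} [Ring A] [Algebra ℂ A] (φ : A →ₗ[ℂ] ℂ) {m : ℕ}
    (b : Fin m → A) (k : Fin m) (x : A) :
    (∏ k' : Fin m, φ (Function.update b k x k')) = φ x * ∏ k' ∈ Finset.univ \ {k}, φ (b k') := by
  have h : ∀ k' : Fin m, φ (Function.update b k x k')
      = Function.update (fun j => φ (b j)) k (φ x) k' := by
    intro k'
    exact Function.apply_update (fun _ v => φ v) b k x k'
  rw [Finset.prod_congr rfl (fun k' _ => h k'), Finset.prod_update_of_mem (Finset.mem_univ k)]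

theorem exists_list_subsemigroup {A : Type*} [Monoid A] {s : Set A} {x : A}
    (hx : x ∈ Subsemigroup.closure s) :
    ∃ l : List A, l ≠ [] ∧ (∀ y ∈ l, y ∈ s) ∧ l.prod = x := by
  induction hx using Subsemigroup.closure_induction with
  | mem x hx => exact ⟨[x], by simp, by simp [hx], by simp⟩
  | mul x y hx hy ihx ihy =>
    obtain ⟨l1, hne1, hmem1, hp1⟩ := ihx
    obtain ⟨l2, hne2, hmem2, hp2⟩ := ihy
    refine ⟨l1 ++ l2, by simp [hne1], ?_, by rw [List.prod_append, hp1, hp2]⟩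
    intro z hz
    rcases List.mem_append.mp hz with h | h
    · exact hmem1 z h
    · exact hmem2 z h

theorem kerGRelOn_refl {m : ℕ} {V : Type*} (E : V → V → Prop) (f : Fin m → V)
    (S : Finset (Fin m)) (k : Fin m) : kerGRelOn E f S k k := by
  refine ⟨rfl, fun l _ h1 h2 _ => ?_⟩
  simp only [min_self, max_self] at h1 h2
  exact absurd (h1.trans h2) (lt_irrefl _)

theorem kerGRelOn_symm {m : ℕ} {V : Type*} {E : V → V → Prop} {f : Fin m → V}
    {S : Finset (Fin m)} {k k' : Fin m} (h : kerGRelOn E f S k k') : kerGRelOn E f S k' k := by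
  obtain ⟨h1, h2⟩ := h
  refine ⟨h1.symm, fun l hl ha hb hne => ?_⟩
  rw [min_comm] at ha; rw [max_comm] at hb
  rw [← h1]
  exact h2 l hl ha hb (h1 ▸ hne)

theorem sort_image {n M : ℕ} (g : Fin n → Fin M) (hg : StrictMono g) (B : Finset (Fin n)) :
    ((B.image g).sort (· ≤ ·)) = (B.sort (· ≤ ·)).map g := by
  have h1 : (B.image g).val = B.val.map g := by
    rw [Finset.image_val, Multiset.dedup_eq_self.mpr (B.nodup.map hg.injective)]
  rw [← Finset.sort_val, ← Finset.sort_val, h1]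
  exact (Multiset.map_sort (f := g) (s := B.val) (r := (· ≤ ·)) (r' := (· ≤ ·)) (fun a _ b _ => (hg.le_iff_le).symm)).symm

theorem blockProd_image {A : Type*} [Monoid A] {n M : ℕ} (a : Fin M → A)
    (g : Fin n → Fin M) (hg : StrictMono g) (B : Finset (Fin n)) :
    blockProd a (B.image g) = blockProd (fun k => a (g k)) B := by
  unfold blockProd
  rw [sort_image g hg, List.map_map]
  rfl

theorem lo_zero {m : ℕ} (n : Fin (m + 1) → ℕ) :
    (∑ u ∈ Finset.univ.filter (fun u => u < (0 : Fin (m + 1))), n u) = 0 := by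
  rw [Finset.sum_eq_zero_iff]
  intro u hu
  simp only [Finset.mem_filter] at hu
  exact absurd hu.2 (Fin.not_lt_zero u)

theorem lo_succ {m : ℕ} (n : Fin (m + 1) → ℕ) (s : Fin m) :
    (∑ u ∈ Finset.univ.filter (fun u => u < Fin.succ s), n u)
      = n 0 + ∑ u ∈ Finset.univ.filter (fun u => u < s), n (Fin.succ u) := by
  rw [Finset.sum_filter, Finset.sum_filter, Fin.sum_univ_succ]
  congr 1
  · apply Finset.sum_congr rfl
    intro u _
    by_cases h : u < s
    · rw [if_pos h, if_pos (Fin.succ_lt_succ_iff.mpr h)]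
    · rw [if_neg h, if_neg (fun hh => h (Fin.succ_lt_succ_iff.mp hh))]

theorem join_getElem {α : Type*} : ∀ {m : ℕ} (L : Fin m → List α) (s : Fin m) (t : ℕ)
    (ht : t < (L s).length) (q : ℕ) (hq : q < ((List.ofFn L).flatten).length)
    (_ : q = (∑ u ∈ Finset.univ.filter (fun u => u < s), (L u).length) + t),
    ((List.ofFn L).flatten)[q] = (L s)[t]
  | 0, L, s, _, _, _, _, _ => absurd s.isLt (by omega)
  | m + 1, L, s, t, ht, q, hq, hqe => by
    have hjoin : (List.ofFn L).flatten = L 0 ++ (List.ofFn (fun u : Fin m => L (Fin.succ u))).flatten := by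
      rw [List.ofFn_succ]; rfl
    induction s using Fin.cases with
    | zero =>
      rw [lo_zero (fun u => (L u).length)] at hqe
      subst hqe
      simp only [hjoin, Nat.zero_add]
      rw [List.getElem_append_left ht]
    | succ s' =>
      rw [lo_succ (fun u => (L u).length) s'] at hqe
      have hq' : q - (L 0).length < ((List.ofFn (fun u : Fin m => L (Fin.succ u))).flatten).length := by
        rw [hjoin] at hq
        simp only [List.length_append] at hq
        omega
      simp only [hjoin]
      rw [List.getElem_append_right (by omega)]
      exact join_getElem (fun u : Fin m => L (Fin.succ u)) s' t ht _ hq'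
        (show q - (L 0).length
            = (∑ u ∈ Finset.univ.filter (fun u => u < s'), (L (Fin.succ u)).length) + t by omega)

theorem fin_val_min {n : ℕ} (a b : Fin n) : ((min a b : Fin n) : ℕ) = min (a : ℕ) (b : ℕ) := by
  rcases le_total a b with h | h
  · rw [min_eq_left h, min_eq_left (Fin.le_def.mp h)]
  · rw [min_eq_right h, min_eq_right (Fin.le_def.mp h)]

theorem fin_val_max {n : ℕ} (a b : Fin n) : ((max a b : Fin n) : ℕ) = max (a : ℕ) (b : ℕ) := by
  rcases le_total a b with h | h
  · rw [max_eq_right h, max_eq_right (Fin.le_def.mp h)]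
  · rw [max_eq_left h, max_eq_left (Fin.le_def.mp h)]

theorem congr_dep {𝒜 : Type*} {m : ℕ} {n : Fin m → ℕ} {β : Type*} (w : ∀ s, Fin (n s) → β)
    {s s' : Fin m} (h : s = s') {t : Fin (n s)} {t' : Fin (n s')} (ht : (t : ℕ) = (t' : ℕ)) :
    w s t = w s' t' := by
  subst h
  cases Fin.ext ht
  rfl

theorem MAIN {𝒜 : Type*} [Ring 𝒜] [Algebra ℂ 𝒜] (φ : 𝒜 →ₗ[ℂ] ℂ)
    {I J : Type*} (E : I → I → Prop)
    (A : I → NonUnitalSubalgebra ℂ 𝒜) (hindep : BMTIndep φ E A)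
    (P : J → Set I)
    (hdisj : ∀ j j', j ≠ j' → Disjoint (P j) (P j'))
    (hEdge : ∀ j j', j ≠ j' → ∀ i ∈ P j, ∀ i' ∈ P j', ¬ E i i')
    {m : ℕ} (hm : 1 ≤ m) (idx : Fin m → J)
    (halt : ∀ (k : ℕ) (h : k + 1 < m), idx ⟨k, Nat.lt_of_succ_lt h⟩ ≠ idx ⟨k + 1, h⟩)
    (n : Fin m → ℕ) (hn : ∀ s, 0 < n s)
    (ι : ∀ s, Fin (n s) → I) (hι : ∀ s t, ι s t ∈ P (idx s))
    (w : ∀ s, Fin (n s) → 𝒜) (hw : ∀ s t, w s t ∈ A (ι s t)) :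
    φ (List.ofFn fun s => (List.ofFn (w s)).prod).prod = ∏ s, φ ((List.ofFn (w s)).prod) := by
  classical
  set M : ℕ := ∑ s, n s with hMdef
  set lo : Fin m → ℕ := fun s => ∑ u ∈ Finset.univ.filter (fun u => u < s), n u with hlodef
  -- basic facts about lo
  have hlo_le : ∀ {s s' : Fin m}, s < s' → lo s + n s ≤ lo s' := by
    intro s s' hss
    have hsub : insert s (Finset.univ.filter (fun u => u < s))
        ⊆ Finset.univ.filter (fun u => u < s') := by
      intro u hu
      rcases Finset.mem_insert.mp hu with rfl | hu
      · simp [hss]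
      · simp only [Finset.mem_filter, Finset.mem_univ, true_and] at hu ⊢
        exact hu.trans hss
    calc lo s + n s = ∑ u ∈ insert s (Finset.univ.filter (fun u => u < s)), n u := by
          rw [Finset.sum_insert (by simp), add_comm]
      _ ≤ _ := Finset.sum_le_sum_of_subset hsub
  have hloM : ∀ s, lo s + n s ≤ M := by
    intro s
    calc lo s + n s = ∑ u ∈ insert s (Finset.univ.filter (fun u => u < s)), n u := by
          rw [Finset.sum_insert (by simp), add_comm]
      _ ≤ _ := Finset.sum_le_sum_of_subset (Finset.subset_univ _)
  have hlo_succ' : ∀ (s : Fin m) (h : (s : ℕ) + 1 < m), lo ⟨(s : ℕ) + 1, h⟩ = lo s + n s := by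
    intro s h
    have hset : Finset.univ.filter (fun u => u < (⟨(s : ℕ) + 1, h⟩ : Fin m))
        = insert s (Finset.univ.filter (fun u => u < s)) := by
      ext u
      simp only [Finset.mem_filter, Finset.mem_univ, true_and, Finset.mem_insert]
      constructor
      · intro hu
        rcases eq_or_lt_of_le (show u ≤ s from by
          rw [Fin.lt_def] at hu; rw [Fin.le_def]; simpa using Nat.lt_succ_iff.mp hu) with h' | h'
        · exact Or.inl h'
        · exact Or.inr h'
      · rintro (rfl | hu)
        · simp only [Fin.lt_def, Fin.val_mk]; omega
        · simp only [Fin.lt_def, Fin.val_mk] at hu ⊢; omega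
    rw [hlodef]
    simp only
    rw [hset, Finset.sum_insert (by simp), add_comm]
  have hlo_last : ∀ (s : Fin m), (s : ℕ) + 1 = m → lo s + n s = M := by
    intro s hs
    have hset : (Finset.univ : Finset (Fin m))
        = insert s (Finset.univ.filter (fun u => u < s)) := by
      ext u
      simp only [Finset.mem_univ, Finset.mem_insert, Finset.mem_filter, true_and, true_iff]
      rcases eq_or_lt_of_le (show u ≤ s from by rw [Fin.le_def]; omega) with h' | h'
      · exact Or.inl h'
      · exact Or.inr h'
    rw [hMdef]
    conv_rhs => rw [hset]
    rw [Finset.sum_insert (by simp), add_comm]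
  -- decomposition
  have hdec : ∀ q : Fin M, ∃ (s : Fin m) (t : ℕ), t < n s ∧ (q : ℕ) = lo s + t := by
    intro q
    have h0m : (0 : ℕ) < m := hm
    have hlo0 : lo ⟨0, h0m⟩ = 0 := by
      rw [hlodef]
      simp only
      rw [Finset.sum_eq_zero_iff]
      intro u hu
      simp only [Finset.mem_filter, Finset.mem_univ, true_and, Fin.lt_def] at hu
      omega
    have hSne : (Finset.univ.filter (fun s => lo s ≤ (q : ℕ))).Nonempty :=
      ⟨⟨0, h0m⟩, by simp only [Finset.mem_filter, Finset.mem_univ, true_and]; omega⟩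
    set s := (Finset.univ.filter (fun s => lo s ≤ (q : ℕ))).max' hSne with hsdef
    have hles : lo s ≤ (q : ℕ) := by
      have h := Finset.max'_mem _ hSne
      rw [← hsdef] at h
      simp only [Finset.mem_filter, Finset.mem_univ, true_and] at h
      exact h
    have ht : (q : ℕ) - lo s < n s := by
      by_contra hcon
      push_neg at hcon
      have hq' : lo s + n s ≤ (q : ℕ) := by omega
      rcases lt_or_eq_of_le (Nat.succ_le_of_lt s.isLt) with hlt | heq
      · have hmem : (⟨(s : ℕ) + 1, hlt⟩ : Fin m)
            ∈ Finset.univ.filter (fun s => lo s ≤ (q : ℕ)) := by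
          simp only [Finset.mem_filter, Finset.mem_univ, true_and]
          rw [hlo_succ' s hlt]; omega
        have h2 := Finset.le_max' _ _ hmem
        rw [← hsdef, Fin.le_def] at h2
        simp at h2
      · have := hlo_last s heq
        have := q.isLt
        omega
    exact ⟨s, (q : ℕ) - lo s, ht, by omega⟩
  have huniq : ∀ {s s' : Fin m} {t t' : ℕ}, t < n s → t' < n s' → lo s + t = lo s' + t' →
      s = s' := by
    intro s s' t t' ht ht' heq
    rcases lt_trichotomy s s' with h | h | h
    · have := hlo_le h; omega
    · exact h
    · have := hlo_le h; omega
  choose seg off hoff hqeq using hdec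
  have he_lt : ∀ (s : Fin m) (t : Fin (n s)), lo s + (t : ℕ) < M :=
    fun s t => lt_of_lt_of_le (by have := t.isLt; omega) (hloM s)
  set e : ∀ s : Fin m, Fin (n s) → Fin M := fun s t => ⟨lo s + (t : ℕ), he_lt s t⟩ with hedef
  have hseg : ∀ (s : Fin m) (t : Fin (n s)), seg (e s t) = s := by
    intro s t
    exact huniq (hoff (e s t)) t.isLt ((hqeq (e s t)).symm)
  have hoffe : ∀ (s : Fin m) (t : Fin (n s)), off (e s t) = (t : ℕ) := by
    intro s t
    have h1 := hqeq (e s t)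
    have h2 := hseg s t
    rw [h2] at h1
    have h3 : ((e s t : Fin M) : ℕ) = lo s + (t : ℕ) := rfl
    omega
  have he_seg : ∀ q : Fin M, e (seg q) ⟨off q, hoff q⟩ = q := by
    intro q
    apply Fin.ext
    exact (hqeq q).symm
  have hseg_lt : ∀ {p q : Fin M}, seg p < seg q → p < q := by
    intro p q h
    have h1 := hqeq p
    have h2 := hqeq q
    have h3 := hoff p
    have h4 := hlo_le h
    rw [Fin.lt_def]
    omega
  have hemono : ∀ s : Fin m, StrictMono (e s) := by
    intro s t t' htt
    rw [hedef, Fin.lt_def]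
    simp only
    rw [Fin.lt_def] at htt
    omega
  -- the full word
  set a' : Fin M → 𝒜 := fun q => w (seg q) ⟨off q, hoff q⟩ with ha'def
  set ι' : Fin M → I := fun q => ι (seg q) ⟨off q, hoff q⟩ with hι'def
  have hai : ∀ q, a' q ∈ A (ι' q) := fun q => hw _ _
  have ha'e : ∀ (s : Fin m) (t : Fin (n s)), a' (e s t) = w s t := by
    intro s t
    exact congr_dep (𝒜 := 𝒜) w (hseg s t) (hoffe s t)
  have hι'e : ∀ (s : Fin m) (t : Fin (n s)), ι' (e s t) = ι s t := by
    intro s t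
    exact congr_dep (𝒜 := 𝒜) ι (hseg s t) (hoffe s t)
  -- separation
  have hsep_lt : ∀ p q : Fin M, seg p < seg q → ¬ kerGRelOn E ι' Finset.univ p q := by
    intro p q hpq hrel
    obtain ⟨hfeq, hbet⟩ := hrel
    have hmp : ι' p ∈ P (idx (seg p)) := hι _ _
    have hmq : ι' q ∈ P (idx (seg q)) := hι _ _
    by_cases hJ : idx (seg p) = idx (seg q)
    · have h1m : (seg p : ℕ) + 1 < m := by
        have h2 := (seg q).isLt; rw [Fin.lt_def] at hpq; omega
      have hne1 : idx (seg p) ≠ idx ⟨(seg p : ℕ) + 1, h1m⟩ := by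
        have h3 := halt (seg p : ℕ) h1m
        simpa using h3
      have hseg_ne : (seg q : ℕ) ≠ (seg p : ℕ) + 1 := by
        intro hc
        exact hne1 (by rw [hJ]; exact congrArg idx (Fin.ext hc))
      set s₁ : Fin m := ⟨(seg p : ℕ) + 1, h1m⟩ with hs₁
      set l : Fin M := e s₁ ⟨0, hn s₁⟩ with hl
      have hsl : seg l = s₁ := hseg _ _
      have hpl : p < l := hseg_lt (by rw [hsl, Fin.lt_def]; simp [hs₁])
      have hlq : l < q := hseg_lt (by
        rw [hsl, Fin.lt_def]
        simp only [hs₁, Fin.val_mk]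
        rw [Fin.lt_def] at hpq
        omega)
      have hml : ι' l ∈ P (idx s₁) := by
        rw [hl, hι'e s₁ ⟨0, hn s₁⟩]
        exact hι _ _
      have hnei : ι' l ≠ ι' p := by
        intro hc
        exact Set.disjoint_left.mp (hdisj _ _ hne1.symm) hml (by rw [hc]; exact hmp)
      have hE := hbet l (Finset.mem_univ l)
        (by rw [min_eq_left (le_of_lt (hseg_lt hpq))]; exact hpl)
        (by rw [max_eq_right (le_of_lt (hseg_lt hpq))]; exact hlq) hnei
      exact hEdge _ _ hne1.symm (ι' l) hml (ι' p) hmp hE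
    · exact Set.disjoint_left.mp (hdisj _ _ hJ) hmp (by rw [hfeq]; exact hmq)
  have hsep : ∀ p q : Fin M, kerGRelOn E ι' Finset.univ p q → seg p = seg q := by
    intro p q h
    rcases lt_trichotomy (seg p) (seg q) with hl | he | hg
    · exact absurd h (hsep_lt p q hl)
    · exact he
    · exact absurd (kerGRelOn_symm h) (hsep_lt q p hg)
  -- embedding
  have hemb : ∀ (s : Fin m) (k k' : Fin (n s)),
      kerGRelOn E (ι s) Finset.univ k k' ↔ kerGRelOn E ι' Finset.univ (e s k) (e s k') := by
    intro s k k'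
    have hvmin : ∀ (N : ℕ) (a b : Fin N), ((min a b : Fin N) : ℕ) = min (a : ℕ) (b : ℕ) := by
      intro N a b
      rcases le_total a b with h | h
      · have h2 : min a b = a := min_eq_left h
        rw [h2, min_eq_left (Fin.le_def.mp h)]
      · have h2 : min a b = b := min_eq_right h
        rw [h2, min_eq_right (Fin.le_def.mp h)]
    have hvmax : ∀ (N : ℕ) (a b : Fin N), ((max a b : Fin N) : ℕ) = max (a : ℕ) (b : ℕ) := by
      intro N a b
      rcases le_total a b with h | h
      · have h2 : max a b = b := max_eq_right h
        rw [h2, max_eq_right (Fin.le_def.mp h)]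
      · have h2 : max a b = a := max_eq_left h
        rw [h2, max_eq_left (Fin.le_def.mp h)]
    have hva : ((e s k) : ℕ) = lo s + (k : ℕ) := rfl
    have hvb : ((e s k') : ℕ) = lo s + (k' : ℕ) := rfl
    have hmin : (((min (e s k) (e s k') : Fin M)) : ℕ) = min (lo s + (k : ℕ)) (lo s + (k' : ℕ)) := by
      rw [hvmin, hva, hvb]
    have hmax : (((max (e s k) (e s k') : Fin M)) : ℕ) = max (lo s + (k : ℕ)) (lo s + (k' : ℕ)) := by
      rw [hvmax, hva, hvb]
    constructor
    · rintro ⟨h1, h2⟩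
      refine ⟨by rw [hι'e s k, hι'e s k']; exact h1, ?_⟩
      intro l _ hal hbl hnel
      rw [Fin.lt_def, hmin] at hal
      rw [Fin.lt_def, hmax] at hbl
      have hk1 := k.isLt
      have hk2 := k'.isLt
      have hlt : (l : ℕ) - lo s < n s := by omega
      have hql := hqeq l
      have hsegl : seg l = s := huniq (hoff l) hlt (by omega)
      set t : Fin (n s) := ⟨(l : ℕ) - lo s, hlt⟩ with htdef
      have hvt : ((e s t) : ℕ) = lo s + ((l : ℕ) - lo s) := rfl
      have hlet : l = e s t := Fin.ext (by rw [hvt]; omega)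
      have h5 : min k k' < t := by rw [Fin.lt_def, hvmin]; simp only [htdef]; omega
      have h6 : t < max k k' := by rw [Fin.lt_def, hvmax]; simp only [htdef]; omega
      have h7 : ι s t ≠ ι s k := by
        rw [hlet] at hnel; rw [hι'e s t, hι'e s k] at hnel; exact hnel
      have h8 := h2 t (Finset.mem_univ t) h5 h6 h7
      rw [hlet, hι'e s t, hι'e s k]
      exact h8
    · rintro ⟨h1, h2⟩
      rw [hι'e s k, hι'e s k'] at h1
      refine ⟨h1, ?_⟩
      intro t _ hat hbt hnet
      have hvt : ((e s t) : ℕ) = lo s + (t : ℕ) := rfl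
      rw [Fin.lt_def, hvmin] at hat
      rw [Fin.lt_def, hvmax] at hbt
      have h5 : min (e s k) (e s k') < e s t := by rw [Fin.lt_def, hmin, hvt]; omega
      have h6 : e s t < max (e s k) (e s k') := by rw [Fin.lt_def, hmax, hvt]; omega
      have h7 : ι' (e s t) ≠ ι' (e s k) := by
        rw [hι'e s t, hι'e s k]; exact hnet
      have h8 := h2 (e s t) (Finset.mem_univ _) h5 h6 h7
      rw [hι'e s t, hι'e s k] at h8
      exact h8
  -- block image identity
  have hblockimg : ∀ (s : Fin m) (k : Fin (n s)),
      (Finset.univ.filter (fun t => kerGRelOn E (ι s) Finset.univ k t)).image (e s)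
        = Finset.univ.filter (fun r => kerGRelOn E ι' Finset.univ (e s k) r) := by
    intro s k
    ext r
    simp only [Finset.mem_image, Finset.mem_filter, Finset.mem_univ, true_and]
    constructor
    · rintro ⟨t, ht, rfl⟩
      exact (hemb s k t).mp ht
    · intro hr
      have hsr : seg r = s := by
        have h9 := hsep (e s k) r hr
        rw [hseg] at h9
        exact h9.symm
      have hofr : off r < n s := by rw [← hsr]; exact hoff r
      refine ⟨⟨off r, hofr⟩, ?_, ?_⟩
      · apply (hemb s k ⟨off r, hofr⟩).mpr
        have hre : e s ⟨off r, hofr⟩ = r := by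
          apply Fin.ext
          have := hqeq r
          rw [hsr] at this
          simpa using this.symm
        rw [hre]
        exact hr
      · apply Fin.ext
        have := hqeq r
        rw [hsr] at this
        simpa using this.symm
  -- blocks decomposition
  have hblocks : kerGBlocks E ι' Finset.univ
      = Finset.univ.biUnion (fun s => (kerGBlocks E (ι s) Finset.univ).image
          (fun C => C.image (e s))) := by
    unfold kerGBlocks
    ext D
    simp only [Finset.mem_image, Finset.mem_biUnion, Finset.mem_univ, true_and]
    constructor
    · rintro ⟨q, rfl⟩
      refine ⟨seg q, Finset.univ.filter
        (fun t => kerGRelOn E (ι (seg q)) Finset.univ ⟨off q, hoff q⟩ t),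
        ⟨⟨off q, hoff q⟩, rfl⟩, ?_⟩
      rw [hblockimg (seg q) ⟨off q, hoff q⟩, he_seg q]
    · rintro ⟨s, C, ⟨k, rfl⟩, rfl⟩
      exact ⟨e s k, (hblockimg s k).symm⟩
  -- sizes
  have hM1 : 1 ≤ M := by
    calc 1 ≤ n ⟨0, hm⟩ := hn _
      _ ≤ M := Finset.single_le_sum (f := n) (fun i _ => Nat.zero_le _) (Finset.mem_univ _)
  have hbmt := hindep M hM1 ι' a' hai
  -- the concatenated list
  have hlist : List.ofFn a' = (List.ofFn fun s => List.ofFn (w s)).flatten := by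
    have hlen : ((List.ofFn fun s => List.ofFn (w s)).flatten).length = M := by
      rw [List.length_flatten, List.map_ofFn]
      simp only [Function.comp_def, List.length_ofFn, List.sum_ofFn]
      rfl
    apply List.ext_getElem
    · rw [List.length_ofFn, hlen]
    · intro i h1 h2
      rw [List.getElem_ofFn]
      have hiM : i < M := by rw [List.length_ofFn] at h1; exact h1
      set q : Fin M := ⟨i, hiM⟩ with hqdef
      have ht : off q < ((fun s => List.ofFn (w s)) (seg q)).length := by
        rw [List.length_ofFn]; exact hoff q
      have hqe : i = (∑ u ∈ Finset.univ.filter (fun u => u < seg q),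
          ((fun s => List.ofFn (w s)) u).length) + off q := by
        have h3 : (∑ u ∈ Finset.univ.filter (fun u => u < seg q),
            ((fun s => List.ofFn (w s)) u).length) = lo (seg q) := by
          simp only [List.length_ofFn]
          rfl
        have h4 := hqeq q
        have h5 : (q : ℕ) = i := rfl
        omega
      rw [join_getElem (fun s => List.ofFn (w s)) (seg q) (off q) ht i h2 hqe]
      rw [List.getElem_ofFn]
  have hprodeq : (List.ofFn fun s => (List.ofFn (w s)).prod).prod = (List.ofFn a').prod := by
    rw [hlist, List.prod_flatten, List.map_ofFn]
    rfl
  -- disjointness of the block families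
  have hdisjblocks : ∀ s ∈ (Finset.univ : Finset (Fin m)), ∀ s' ∈ (Finset.univ : Finset (Fin m)),
      s ≠ s' → Disjoint ((kerGBlocks E (ι s) Finset.univ).image (fun C => C.image (e s)))
        ((kerGBlocks E (ι s') Finset.univ).image (fun C => C.image (e s'))) := by
    intro s _ s' _ hss
    rw [Finset.disjoint_left]
    rintro D hD hD'
    unfold kerGBlocks at hD hD'
    simp only [Finset.mem_image, Finset.mem_univ, true_and] at hD hD'
    obtain ⟨C, ⟨k, rfl⟩, rfl⟩ := hD
    obtain ⟨C', ⟨k', rfl⟩, hD'⟩ := hD'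
    have hk : k ∈ Finset.univ.filter (fun t => kerGRelOn E (ι s) Finset.univ k t) := by
      simp only [Finset.mem_filter, Finset.mem_univ, true_and]
      exact kerGRelOn_refl E (ι s) Finset.univ k
    have hmem : e s k ∈ (Finset.univ.filter
        (fun t => kerGRelOn E (ι s') Finset.univ k' t)).image (e s') := by
      rw [hD']
      exact Finset.mem_image_of_mem _ hk
    simp only [Finset.mem_image] at hmem
    obtain ⟨t', _, ht'⟩ := hmem
    have h5 : seg (e s' t') = s' := hseg s' t'
    rw [ht', hseg s k] at h5
    exact hss h5
  -- put everything together
  rw [hprodeq, hbmt, hblocks, Finset.prod_biUnion hdisjblocks]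
  apply Finset.prod_congr rfl
  intro s _
  rw [Finset.prod_image (fun C _ C' _ h => Finset.image_injective (hemono s).injective h)]
  have hcongr : ∀ C ∈ kerGBlocks E (ι s) Finset.univ,
      φ (blockProd a' (C.image (e s))) = φ (blockProd (w s) C) := by
    intro C _
    rw [blockProd_image a' (e s) (hemono s) C]
    congr 1
    unfold blockProd
    congr 1
    apply List.map_congr_left
    intro t _
    exact ha'e s t
  rw [Finset.prod_congr rfl hcongr]
  exact (hindep (n s) (hn s) (ι s) (w s) (fun t => hw s t)).symm

/-- consistency, boolean case. If no edges between distinct groups are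
present, the generated subalgebras are boolean independent. -/
theorem stmt9    {𝒜 : Type*} [Ring 𝒜] [Algebra ℂ 𝒜] (φ : 𝒜 →ₗ[ℂ] ℂ) (hφ : φ 1 = 1)
    {I J : Type*} (E : I → I → Prop) (hE : ∀ v, ¬ E v v)
    (A : I → NonUnitalSubalgebra ℂ 𝒜) (hindep : BMTIndep φ E A)
    (P : J → Set I) (hne : ∀ j, (P j).Nonempty)
    (hdisj : ∀ j j', j ≠ j' → Disjoint (P j) (P j'))
    (hcover : ∀ i, ∃ j, i ∈ P j)
    (B : J → NonUnitalSubalgebra ℂ 𝒜)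
    (hB : ∀ j, B j = NonUnitalAlgebra.adjoin ℂ (⋃ i ∈ P j, (A i : Set 𝒜)))
    (hEdge : ∀ j j', j ≠ j' → ∀ i ∈ P j, ∀ i' ∈ P j', ¬ E i i') :
    ∀ (m : ℕ), 1 ≤ m → ∀ (idx : Fin m → J) (b : Fin m → 𝒜),
      (∀ k, b k ∈ B (idx k)) →
      (∀ (k : ℕ) (h : k + 1 < m), idx ⟨k, by omega⟩ ≠ idx ⟨k + 1, h⟩) →
      φ (List.ofFn b).prod = ∏ k : Fin m, φ (b k) := by
  classical
  intro m hm idx b hb halt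
  have hspan : ∀ k, b k ∈ Submodule.span ℂ
      ((Subsemigroup.closure (⋃ i ∈ P (idx k), (A i : Set 𝒜)) : Subsemigroup 𝒜) : Set 𝒜) := by
    intro k
    have h1 : b k ∈ B (idx k) := hb k
    rw [hB (idx k)] at h1
    have h2 := NonUnitalAlgebra.adjoin_eq_span (R := ℂ) (⋃ i ∈ P (idx k), (A i : Set 𝒜))
    have h3 : b k ∈ (NonUnitalAlgebra.adjoin ℂ
        (⋃ i ∈ P (idx k), (A i : Set 𝒜))).toSubmodule := h1
    rw [h2] at h3
    exact h3
  refine span_induction_pi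
    (fun k => ((Subsemigroup.closure (⋃ i ∈ P (idx k), (A i : Set 𝒜)) : Subsemigroup 𝒜) : Set 𝒜))
    (fun b => φ (List.ofFn b).prod = ∏ k : Fin m, φ (b k)) ?_ ?_ ?_ ?_ b hspan
  · -- zero
    intro b k
    rw [prod_ofFn_update, phi_prod_update]
    simp
  · -- add
    intro b k x y hx hy
    rw [prod_ofFn_update, phi_prod_update] at hx hy ⊢
    rw [mul_add, add_mul, map_add, hx, hy, map_add]
    ring
  · -- smul
    intro b k c x hx
    rw [prod_ofFn_update, phi_prod_update] at hx ⊢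
    rw [mul_smul_comm, smul_mul_assoc, map_smul, smul_eq_mul, hx, map_smul, smul_eq_mul]
    ring
  · -- base case
    intro b hbmem
    have hex : ∀ k, ∃ l : List 𝒜, l ≠ [] ∧
        (∀ y ∈ l, y ∈ ⋃ i ∈ P (idx k), (A i : Set 𝒜)) ∧ l.prod = b k := by
      intro k
      exact exists_list_subsemigroup (hbmem k)
    choose l hlne hlmem hlprod using hex
    have hn : ∀ k, 0 < (l k).length := fun k => List.length_pos_iff.mpr (hlne k)
    set w : ∀ k, Fin ((l k).length) → 𝒜 := fun k t => (l k).get t with hwdef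
    have hwb : ∀ k, (List.ofFn (w k)).prod = b k := by
      intro k
      rw [hwdef]
      simp only
      rw [List.ofFn_get]
      exact hlprod k
    have hex2 : ∀ k t, ∃ i, i ∈ P (idx k) ∧ w k t ∈ A i := by
      intro k t
      have h4 : w k t ∈ ⋃ i ∈ P (idx k), (A i : Set 𝒜) := hlmem k _ (by exact List.get_mem (l k) t)
      rw [Set.mem_iUnion₂] at h4
      obtain ⟨i, hi1, hi2⟩ := h4
      exact ⟨i, hi1, hi2⟩
    choose ι hι hw using hex2
    have hmain := MAIN φ E A hindep P hdisj hEdge hm idx halt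
      (fun k => (l k).length) hn ι hι w hw
    have hb' : b = fun k => (List.ofFn (w k)).prod := funext fun k => (hwb k).symm
    rw [hb']
    exact hmain


end
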